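/- Let a > 1, b, c > 0, and let R_{j,k} = S_{bk} (the shear matrix) for all j,k ∈ ℤ. Let Λ = {(a^j, bk, c R_{j,k}^{-1} m) : j,k ∈ ℤ, m ∈ ℤ²} with weights w(a^j, bk, c R_{j,k}^{-1} m) = |det R_{j,k}|^{-1} = 1. Then Λ with weights w has uniform weighted shearlet density D⁺(Λ,w) = D⁻(Λ,w) = 1/(b c² ln a). -/

import Mathlib

open MeasureTheory Real Filter Set
open scoped ENNReal
noncomputable section

/-- The parabolic scaling matrix `A_a = diag(a, √a)` acting on `ℝ²`. -/
def Aa (a : ℝ) (t : ℝ × ℝ) : ℝ × ℝ := (a * t.1, Real.sqrt a * t.2)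

/-- The shear matrix `S_s = [[1,s],[0,1]]` acting on `ℝ²`. -/
def Ss (s : ℝ) (t : ℝ × ℝ) : ℝ × ℝ := (t.1 + s * t.2, t.2)

/-- Underlying space of the shearlet group: `(a, s, t₁, t₂)`. -/
abbrev SG := ℝ × ℝ × ℝ × ℝ

/-- Shearlet group multiplication
`(a,s,t)·(a',s',t') = (a'a, s' + s√a', t' + S_{s'} A_{a'} t)`. -/
def smul (p q : SG) : SG :=
  (q.1 * p.1, q.2.1 + p.2.1 * Real.sqrt q.1, q.2.2 + Ss q.2.1 (Aa q.1 p.2.2))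

/-- The box `Q_h = [e^{-h/2}, e^{h/2}) × [-h/2, h/2) × [-h/2, h/2)²`. -/
def Qbox (h : ℝ) : Set SG :=
  Set.Ico (Real.exp (-h/2)) (Real.exp (h/2)) ×ˢ
    (Set.Ico (-h/2) (h/2) ×ˢ (Set.Ico (-h/2) (h/2) ×ˢ Set.Ico (-h/2) (h/2)))

/-- The left-translated box `Q_h(g) = g · Q_h`. -/
def boxAt (h : ℝ) (g : SG) : Set SG := (fun p => smul g p) '' Qbox h

/-- Weighted number of points of `Λ` in `K`: `#_w(Λ ∩ K)`. -/
def wNum (Λ : Set SG) (w : SG → ℝ) (K : Set SG) : ℝ≥0∞ :=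
  ∑' p : ↥(Λ ∩ K), ENNReal.ofReal (w p)

/-- Upper weighted shearlet density `D⁺(Λ, w)`. -/
def upperDensity (Λ : Set SG) (w : SG → ℝ) : ℝ≥0∞ :=
  Filter.limsup (fun h : ℝ =>
    ⨆ (g : SG) (_ : 0 < g.1), wNum Λ w (boxAt h g) / ENNReal.ofReal (h ^ 4)) Filter.atTop

/-- Lower weighted shearlet density `D⁻(Λ, w)`. -/
def lowerDensity (Λ : Set SG) (w : SG → ℝ) : ℝ≥0∞ :=
  Filter.liminf (fun h : ℝ =>
    ⨅ (g : SG) (_ : 0 < g.1), wNum Λ w (boxAt h g) / ENNReal.ofReal (h ^ 4)) Filter.atTop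


-- interval
def II (y h : ℝ) : Set ℝ := Set.Ico (y - h/2) (y + h/2)

lemma mem_II_iff' {x' x y h : ℝ} (e : x' = x - y) :
    x' ∈ Set.Ico (-h/2) (h/2) ↔ x ∈ II y h := by
  subst e
  simp only [II, Set.mem_Ico]
  constructor <;> rintro ⟨h1, h2⟩ <;> constructor <;> linarith

lemma count_upper {s h y : ℝ} (hs : 0 < s) {n : ℤ} (hn : s * n ∈ II y h) :
    n - ⌈(y - h/2)/s⌉ ∈ Set.Ico (0:ℤ) (⌊h/s⌋ + 1) := by
  obtain ⟨h1, h2⟩ := hn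
  constructor
  · have : ⌈(y - h/2)/s⌉ ≤ n := Int.ceil_le.mpr ((div_le_iff₀ hs).mpr (by
      have := mul_comm s (n:ℝ); linarith))
    omega
  · have h3 : (n:ℝ) < (y + h/2)/s := (lt_div_iff₀ hs).mpr (by
      have := mul_comm s (n:ℝ); linarith)
    have h4 : ((y - h/2)/s : ℝ) ≤ ⌈(y - h/2)/s⌉ := Int.le_ceil _
    have hd : (y + h/2)/s - (y - h/2)/s = h/s := by field_simp; ring
    have h5 : ((n - ⌈(y - h/2)/s⌉ : ℤ) : ℝ) ≤ h/s := by push_cast; linarith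
    have := Int.le_floor.mpr h5
    omega

lemma count_lower {s h y : ℝ} (hs : 0 < s) {i : ℤ} (hi : i ∈ Set.Ico (0:ℤ) (⌊h/s⌋ - 1)) :
    s * (i + ⌈(y - h/2)/s⌉) ∈ II y h := by
  obtain ⟨h1, h2⟩ := hi
  have hc : ((y - h/2)/s : ℝ) ≤ ⌈(y - h/2)/s⌉ := Int.le_ceil _
  have hc2 : (⌈(y - h/2)/s⌉ : ℝ) < (y - h/2)/s + 1 := Int.ceil_lt_add_one _
  have hf : (⌊h/s⌋ : ℝ) ≤ h/s := Int.floor_le _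
  have hi0 : (0:ℝ) ≤ (i:ℝ) := by exact_mod_cast h1
  have hi2 : (i:ℝ) ≤ (⌊h/s⌋ : ℝ) - 2 := by
    have : i ≤ ⌊h/s⌋ - 2 := by omega
    exact_mod_cast this
  have key : (y + h/2)/s = (y - h/2)/s + h/s := by field_simp; ring
  constructor
  · have h6 : (y - h/2)/s ≤ (i:ℝ) + ⌈(y - h/2)/s⌉ := by linarith
    calc y - h/2 = ((y - h/2)/s) * s := by field_simp
      _ ≤ ((i:ℝ) + ⌈(y - h/2)/s⌉) * s := mul_le_mul_of_nonneg_right h6 hs.le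
      _ = s * ((i:ℝ) + ⌈(y - h/2)/s⌉) := by ring
  · have h6 : (i:ℝ) + ⌈(y - h/2)/s⌉ < (y + h/2)/s := by rw [key]; linarith
    calc s * ((i:ℝ) + ⌈(y - h/2)/s⌉) < s * ((y + h/2)/s) := by
          exact mul_lt_mul_of_pos_left h6 hs
      _ = y + h/2 := by field_simp

-- group inverse
def ginv (g p : SG) : SG :=
  (p.1 / g.1,
   p.2.1 - g.2.1 * Real.sqrt (p.1 / g.1),
   p.2.2.1 - (p.1 / g.1 * g.2.2.1 +
     (p.2.1 - g.2.1 * Real.sqrt (p.1 / g.1)) * Real.sqrt (p.1 / g.1) * g.2.2.2),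
   p.2.2.2 - Real.sqrt (p.1 / g.1) * g.2.2.2)

lemma ginv_smul {g : SG} (hg : g.1 ≠ 0) : Function.LeftInverse (ginv g) (smul g) := by
  rintro ⟨q1, q2, q3, q4⟩
  have key : q1 * g.1 / g.1 = q1 := mul_div_cancel_right₀ _ hg
  simp only [smul, ginv, Ss, Aa, key, Prod.mk_add_mk, Prod.mk.injEq]
  norm_num
  all_goals ring

lemma smul_ginv {g : SG} (hg : g.1 ≠ 0) : Function.RightInverse (ginv g) (smul g) := by
  rintro ⟨p1, p2, p3, p4⟩
  have key : p1 / g.1 * g.1 = p1 := div_mul_cancel₀ _ hg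
  simp only [smul, ginv, Ss, Aa, key, Prod.mk_add_mk, Prod.mk.injEq]
  norm_num
  all_goals ring

lemma boxAt_eq {g : SG} (hg : g.1 ≠ 0) (h : ℝ) : boxAt h g = ginv g ⁻¹' Qbox h :=
  congrFun (Set.image_eq_preimage_of_inverse (ginv_smul hg) (smul_ginv hg)) (Qbox h)

lemma exp_Ico_iff {u h : ℝ} (hu : 0 < u) :
    u ∈ Set.Ico (Real.exp (-h/2)) (Real.exp (h/2)) ↔ Real.log u ∈ Set.Ico (-h/2) (h/2) := by
  simp only [Set.mem_Ico]
  rw [Real.le_log_iff_exp_le hu, Real.log_lt_iff_lt_exp hu]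


abbrev ZI := ℤ × ℤ × ℤ × ℤ

def phi (a b c : ℝ) (v : ZI) : SG :=
  ((a ^ v.1 : ℝ), b * v.2.1, c * ((v.2.2.1 : ℝ) - b * v.2.1 * v.2.2.2), c * v.2.2.2)

def rr (a : ℝ) (g : SG) (j : ℤ) : ℝ := Real.sqrt (a ^ j / g.1)

def XX (a b c : ℝ) (g : SG) (j k n : ℤ) : ℝ :=
  c * (b * k * n) + a ^ j / g.1 * g.2.2.1 +
    (b * k - g.2.1 * rr a g j) * rr a g j * g.2.2.2

lemma range_phi (a b c : ℝ) :
    {p : SG | ∃ (j k : ℤ) (m : ℤ × ℤ),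
        p = ((a ^ j : ℝ), b * k, c * ((m.1 : ℝ) - b * k * m.2), c * m.2)}
      = Set.range (phi a b c) := by
  ext p
  constructor
  · rintro ⟨j, k, m, rfl⟩; exact ⟨(j, k, m.1, m.2), rfl⟩
  · rintro ⟨v, rfl⟩; exact ⟨v.1, v.2.1, (v.2.2.1, v.2.2.2), rfl⟩

lemma phi_inj {a b c : ℝ} (ha : 1 < a) (hb : 0 < b) (hc : 0 < c) :
    Function.Injective (phi a b c) := by
  have hla : Real.log a ≠ 0 := (Real.log_pos ha).ne'
  rintro ⟨j, k, m, n⟩ ⟨j', k', m', n'⟩ hv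
  simp only [phi, Prod.mk.injEq] at hv
  obtain ⟨e1, e2, e3, e4⟩ := hv
  have hj : (j:ℝ) * Real.log a = (j':ℝ) * Real.log a := by
    rw [← Real.log_zpow, ← Real.log_zpow, e1]
  have hj' : j = j' := by exact_mod_cast mul_right_cancel₀ hla hj
  have hk : k = k' := by exact_mod_cast mul_left_cancel₀ hb.ne' e2
  have hn : n = n' := by exact_mod_cast mul_left_cancel₀ hc.ne' e4
  subst hj' hk hn
  have e3' := mul_left_cancel₀ hc.ne' e3
  have hm : m = m' := by
    have : (m:ℝ) = m' := by linarith
    exact_mod_cast this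
  subst hm; rfl

lemma mem_box_iff (a b c : ℝ) (ha : 1 < a) {g : SG} (hg : 0 < g.1) (h : ℝ) (v : ZI) :
    phi a b c v ∈ boxAt h g ↔
      (Real.log a * v.1 ∈ II (Real.log g.1) h ∧
       b * v.2.1 ∈ II (g.2.1 * rr a g v.1) h ∧
       c * v.2.2.1 ∈ II (XX a b c g v.1 v.2.1 v.2.2.2) h ∧
       c * v.2.2.2 ∈ II (rr a g v.1 * g.2.2.2) h) := by
  obtain ⟨j, k, m, n⟩ := v
  have ha0 : (0:ℝ) < a := lt_trans one_pos ha
  have hzp : (0:ℝ) < (a:ℝ) ^ j := zpow_pos ha0 j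
  have hu : 0 < (a:ℝ) ^ j / g.1 := div_pos hzp hg
  rw [boxAt_eq hg.ne' h, Set.mem_preimage]
  simp only [Qbox, ginv, phi, Set.mem_prod]
  rw [exp_Ico_iff hu]
  have hlog : Real.log ((a:ℝ) ^ j / g.1) = Real.log a * j - Real.log g.1 := by
    rw [Real.log_div hzp.ne' hg.ne', Real.log_zpow]; ring
  rw [hlog]
  refine and_congr (mem_II_iff' rfl) (and_congr (mem_II_iff' ?_)
    (and_congr (mem_II_iff' ?_) (mem_II_iff' ?_)))
  · simp only [rr]
  · simp only [rr, XX]; ring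
  · simp only [rr]

def sh0 (a : ℝ) (g : SG) (h : ℝ) : ℤ := ⌈(Real.log g.1 - h/2)/Real.log a⌉
def sh1 (a b : ℝ) (g : SG) (h : ℝ) (j : ℤ) : ℤ := ⌈(g.2.1 * rr a g j - h/2)/b⌉
def sh2 (a c : ℝ) (g : SG) (h : ℝ) (j : ℤ) : ℤ := ⌈(rr a g j * g.2.2.2 - h/2)/c⌉
def sh3 (a b c : ℝ) (g : SG) (h : ℝ) (j k n : ℤ) : ℤ := ⌈(XX a b c g j k n - h/2)/c⌉

def psi (a b c : ℝ) (g : SG) (h : ℝ) (v : ZI) : ZI :=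
  (v.1 - sh0 a g h, v.2.1 - sh1 a b g h v.1,
   v.2.2.1 - sh3 a b c g h v.1 v.2.1 v.2.2.2, v.2.2.2 - sh2 a c g h v.1)

lemma psi_inj (a b c : ℝ) (g : SG) (h : ℝ) : Function.Injective (psi a b c g h) := by
  rintro ⟨j, k, m, n⟩ ⟨j', k', m', n'⟩ hv
  simp only [psi, Prod.mk.injEq] at hv
  obtain ⟨e1, e2, e3, e4⟩ := hv
  have hj : j = j' := by omega
  subst hj
  have hk : k = k' := by omega
  subst hk
  have hn : n = n' := by omega
  subst hn
  have hm : m = m' := by omega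
  subst hm; rfl


lemma toNat_cast_real {z : ℤ} (hz : 0 ≤ z) : ((z.toNat : ℕ) : ℝ) = (z : ℝ) := by
  exact_mod_cast congrArg (fun t : ℤ => (t : ℝ)) (Int.toNat_of_nonneg hz)

lemma floor_add_one_toNat_le {x : ℝ} (hx : 0 ≤ x) : (((⌊x⌋ + 1).toNat : ℕ) : ℝ) ≤ x + 1 := by
  have h0 : (0:ℤ) ≤ ⌊x⌋ + 1 := by
    have := Int.floor_nonneg.mpr hx; omega
  rw [toNat_cast_real h0]
  push_cast
  linarith [Int.floor_le x]

lemma floor_sub_one_toNat_ge (x : ℝ) : x - 2 ≤ (((⌊x⌋ - 1).toNat : ℕ) : ℝ) := by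
  rcases le_or_gt 0 (⌊x⌋ - 1) with h0 | h0
  · rw [toNat_cast_real h0]
    push_cast
    linarith [Int.lt_floor_add_one x]
  · have hz : (⌊x⌋ - 1).toNat = 0 := Int.toNat_of_nonpos h0.le
    rw [hz]
    have h1 : (⌊x⌋ : ℝ) ≤ 1 := by exact_mod_cast (by omega : ⌊x⌋ ≤ 1)
    have := Int.lt_floor_add_one x
    norm_num
    linarith

lemma prod_box_encard (N0 N1 N2 N3 : ℤ) :
    ((Set.Ico (0:ℤ) N0 ×ˢ (Set.Ico (0:ℤ) N1 ×ˢ (Set.Ico (0:ℤ) N2 ×ˢ Set.Ico (0:ℤ) N3)) :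
      Set ZI)).encard
      = ((N0.toNat * (N1.toNat * (N2.toNat * N3.toNat)) : ℕ) : ℕ∞) := by
  have e : (Set.Ico (0:ℤ) N0 ×ˢ (Set.Ico (0:ℤ) N1 ×ˢ (Set.Ico (0:ℤ) N2 ×ˢ Set.Ico (0:ℤ) N3)) :
      Set ZI) = ↑(Finset.Ico (0:ℤ) N0 ×ˢ (Finset.Ico (0:ℤ) N1 ×ˢ
        (Finset.Ico (0:ℤ) N2 ×ˢ Finset.Ico (0:ℤ) N3))) := by
    simp [Finset.coe_product]
  rw [e, Set.encard_coe_eq_coe_finsetCard]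
  simp [Finset.card_product, Int.card_Ico]

lemma card_upper {a b c : ℝ} (ha : 1 < a) (hb : 0 < b) (hc : 0 < c)
    {g : SG} (hg : 0 < g.1) {h : ℝ} (hh : 0 < h) :
    ((phi a b c ⁻¹' boxAt h g).encard : ℝ≥0∞) ≤
      ENNReal.ofReal ((h/Real.log a + 1) * ((h/b + 1) * ((h/c + 1) * (h/c + 1)))) := by
  have hla : 0 < Real.log a := Real.log_pos ha
  have hsub : psi a b c g h '' (phi a b c ⁻¹' boxAt h g) ⊆
      (Set.Ico (0:ℤ) (⌊h/Real.log a⌋ + 1) ×ˢ (Set.Ico (0:ℤ) (⌊h/b⌋ + 1) ×ˢ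
        (Set.Ico (0:ℤ) (⌊h/c⌋ + 1) ×ˢ Set.Ico (0:ℤ) (⌊h/c⌋ + 1))) : Set ZI) := by
    rintro _ ⟨v, hv, rfl⟩
    rw [Set.mem_preimage, mem_box_iff a b c ha hg h] at hv
    obtain ⟨h1, h2, h3, h4⟩ := hv
    exact ⟨count_upper hla h1, count_upper hb h2, count_upper hc h3, count_upper hc h4⟩
  have e1 : (phi a b c ⁻¹' boxAt h g).encard
      = (psi a b c g h '' (phi a b c ⁻¹' boxAt h g)).encard :=
    ((psi_inj a b c g h).encard_image _).symm
  have le1 : (phi a b c ⁻¹' boxAt h g).encard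
      ≤ ((⌊h/Real.log a⌋ + 1).toNat * ((⌊h/b⌋ + 1).toNat *
          ((⌊h/c⌋ + 1).toNat * (⌊h/c⌋ + 1).toNat)) : ℕ) := by
    rw [e1, ← prod_box_encard]
    exact Set.encard_le_encard hsub
  calc ((phi a b c ⁻¹' boxAt h g).encard : ℝ≥0∞)
      ≤ ((((⌊h/Real.log a⌋ + 1).toNat * ((⌊h/b⌋ + 1).toNat *
          ((⌊h/c⌋ + 1).toNat * (⌊h/c⌋ + 1).toNat)) : ℕ) : ℕ∞) : ℝ≥0∞) := by
        exact_mod_cast le1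
    _ = ((((⌊h/Real.log a⌋ + 1).toNat * ((⌊h/b⌋ + 1).toNat *
          ((⌊h/c⌋ + 1).toNat * (⌊h/c⌋ + 1).toNat)) : ℕ) : ℝ≥0∞)) := by
        simp
    _ ≤ ENNReal.ofReal ((h/Real.log a + 1) * ((h/b + 1) * ((h/c + 1) * (h/c + 1)))) := by
        rw [← ENNReal.ofReal_natCast]
        apply ENNReal.ofReal_le_ofReal
        push_cast
        have A0 := floor_add_one_toNat_le (le_of_lt (div_pos hh hla))
        have A1 := floor_add_one_toNat_le (le_of_lt (div_pos hh hb))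
        have A2 := floor_add_one_toNat_le (le_of_lt (div_pos hh hc))
        have B0 : (0:ℝ) ≤ ((⌊h/Real.log a⌋ + 1).toNat : ℝ) := Nat.cast_nonneg _
        have B1 : (0:ℝ) ≤ ((⌊h/b⌋ + 1).toNat : ℝ) := Nat.cast_nonneg _
        have B2 : (0:ℝ) ≤ ((⌊h/c⌋ + 1).toNat : ℝ) := Nat.cast_nonneg _
        gcongr

lemma card_lower {a b c : ℝ} (ha : 1 < a) (hb : 0 < b) (hc : 0 < c)
    {g : SG} (hg : 0 < g.1) {h : ℝ}
    (h2a : 2 * Real.log a ≤ h) (h2b : 2 * b ≤ h) (h2c : 2 * c ≤ h) :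
    ENNReal.ofReal ((h/Real.log a - 2) * ((h/b - 2) * ((h/c - 2) * (h/c - 2)))) ≤
      ((phi a b c ⁻¹' boxAt h g).encard : ℝ≥0∞) := by
  have hla : 0 < Real.log a := Real.log_pos ha
  have hsub : (Set.Ico (0:ℤ) (⌊h/Real.log a⌋ - 1) ×ˢ (Set.Ico (0:ℤ) (⌊h/b⌋ - 1) ×ˢ
        (Set.Ico (0:ℤ) (⌊h/c⌋ - 1) ×ˢ Set.Ico (0:ℤ) (⌊h/c⌋ - 1))) : Set ZI)
      ⊆ psi a b c g h '' (phi a b c ⁻¹' boxAt h g) := by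
    rintro ⟨j', k', m', n'⟩ ⟨hj, hk, hm, hn⟩
    refine ⟨(j' + sh0 a g h,
             k' + sh1 a b g h (j' + sh0 a g h),
             m' + sh3 a b c g h (j' + sh0 a g h) (k' + sh1 a b g h (j' + sh0 a g h))
                (n' + sh2 a c g h (j' + sh0 a g h)),
             n' + sh2 a c g h (j' + sh0 a g h)), ?_, ?_⟩
    · rw [Set.mem_preimage, mem_box_iff a b c ha hg h]
      refine ⟨?_, ?_, ?_, ?_⟩
      · simp only [sh0]; push_cast; exact count_lower hla hj
      · simp only [sh1]; push_cast; exact count_lower hb hk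
      · simp only [sh3]; push_cast; exact count_lower hc hm
      · simp only [sh2]; push_cast; exact count_lower hc hn
    · simp only [psi, Prod.mk.injEq]
      refine ⟨by omega, by omega, by omega, by omega⟩
  have le1 : (((⌊h/Real.log a⌋ - 1).toNat * ((⌊h/b⌋ - 1).toNat *
          ((⌊h/c⌋ - 1).toNat * (⌊h/c⌋ - 1).toNat)) : ℕ) : ℕ∞)
      ≤ (phi a b c ⁻¹' boxAt h g).encard := by
    rw [← (psi_inj a b c g h).encard_image (phi a b c ⁻¹' boxAt h g), ← prod_box_encard]
    exact Set.encard_le_encard hsub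
  calc ENNReal.ofReal ((h/Real.log a - 2) * ((h/b - 2) * ((h/c - 2) * (h/c - 2))))
      ≤ (((⌊h/Real.log a⌋ - 1).toNat * ((⌊h/b⌋ - 1).toNat *
          ((⌊h/c⌋ - 1).toNat * (⌊h/c⌋ - 1).toNat)) : ℕ) : ℝ≥0∞) := by
        rw [← ENNReal.ofReal_natCast]
        apply ENNReal.ofReal_le_ofReal
        push_cast
        have A0 := floor_sub_one_toNat_ge (h/Real.log a)
        have A1 := floor_sub_one_toNat_ge (h/b)
        have A2 := floor_sub_one_toNat_ge (h/c)
        have C0 : (0:ℝ) ≤ h/Real.log a - 2 := by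
          have := (le_div_iff₀ hla).mpr h2a
          linarith
        have C1 : (0:ℝ) ≤ h/b - 2 := by
          have := (le_div_iff₀ hb).mpr (by linarith : 2 * b ≤ h)
          linarith
        have C2 : (0:ℝ) ≤ h/c - 2 := by
          have := (le_div_iff₀ hc).mpr (by linarith : 2 * c ≤ h)
          linarith
        gcongr
    _ ≤ ((phi a b c ⁻¹' boxAt h g).encard : ℝ≥0∞) := by exact_mod_cast le1

lemma wNum_eq {a b c : ℝ} (ha : 1 < a) (hb : 0 < b) (hc : 0 < c) (K : Set SG) :
    wNum {p : SG | ∃ (j k : ℤ) (m : ℤ × ℤ),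
        p = ((a ^ j : ℝ), b * k, c * ((m.1 : ℝ) - b * k * m.2), c * m.2)} (fun _ => 1) K
      = ((phi a b c ⁻¹' K).encard : ℝ≥0∞) := by
  rw [wNum]
  simp only [ENNReal.ofReal_one]
  rw [ENNReal.tsum_set_one]
  have : ({p : SG | ∃ (j k : ℤ) (m : ℤ × ℤ),
        p = ((a ^ j : ℝ), b * k, c * ((m.1 : ℝ) - b * k * m.2), c * m.2)} ∩ K).encard
      = (phi a b c ⁻¹' K).encard := by
    rw [range_phi a b c, Set.inter_comm, ← Set.image_preimage_eq_inter_range]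
    exact (phi_inj ha hb hc).encard_image _
  rw [this]

lemma tendsto_aux {la b c : ℝ} (hla : 0 < la) (hb : 0 < b) (hc : 0 < c) (e : ℝ) :
    Tendsto (fun h : ℝ => ENNReal.ofReal ((h/la + e) * ((h/b + e) * ((h/c + e) * (h/c + e)))) /
        ENNReal.ofReal (h^4)) atTop (nhds (ENNReal.ofReal (1/(b * c^2 * la)))) := by
  have l0 : Tendsto (fun h : ℝ => e/h) atTop (nhds 0) := tendsto_const_nhds.div_atTop tendsto_id
  have lA : Tendsto (fun h : ℝ => 1/la + e/h) atTop (nhds (1/la)) := by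
    simpa using tendsto_const_nhds.add l0
  have lB : Tendsto (fun h : ℝ => 1/b + e/h) atTop (nhds (1/b)) := by
    simpa using tendsto_const_nhds.add l0
  have lC : Tendsto (fun h : ℝ => 1/c + e/h) atTop (nhds (1/c)) := by
    simpa using tendsto_const_nhds.add l0
  have lim := lA.mul (lB.mul (lC.mul lC))
  have hval : 1/la * (1/b * (1/c * (1/c))) = 1/(b * c^2 * la) := by
    field_simp
  rw [hval] at lim
  have key : (fun h : ℝ =>
      ENNReal.ofReal ((1/la + e/h) * ((1/b + e/h) * ((1/c + e/h) * (1/c + e/h)))))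
      =ᶠ[atTop] fun h : ℝ =>
        ENNReal.ofReal ((h/la + e) * ((h/b + e) * ((h/c + e) * (h/c + e)))) /
          ENNReal.ofReal (h^4) := by
    filter_upwards [eventually_gt_atTop 0] with h hh
    rw [← ENNReal.ofReal_div_of_pos (by positivity)]
    congr 1
    have hh' : h ≠ 0 := hh.ne'
    rw [eq_div_iff (by positivity : h^4 ≠ 0)]
    field_simp
  exact Tendsto.congr' key (ENNReal.tendsto_ofReal lim)

/-- Oversampled shearlet system with `R_{j,k} = S_{bk}`: the parameter set
`Λ = {(a^j, bk, c S_{bk}⁻¹ m)}` with weights `w ≡ |det S_{bk}|⁻¹ = 1` has uniform weighted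
shearlet density `1/(b c² ln a)`. Here `S_{bk}⁻¹ m = (m₁ − bk m₂, m₂)`. -/
theorem oversampled_shear_uniform_density (a b c : ℝ) (ha : 1 < a) (hb : 0 < b) (hc : 0 < c) :
    upperDensity {p : SG | ∃ (j k : ℤ) (m : ℤ × ℤ),
        p = ((a ^ j : ℝ), b * k, c * ((m.1 : ℝ) - b * k * m.2), c * m.2)} (fun _ => 1)
      = ENNReal.ofReal (1 / (b * c ^ 2 * Real.log a)) ∧
    lowerDensity {p : SG | ∃ (j k : ℤ) (m : ℤ × ℤ),
        p = ((a ^ j : ℝ), b * k, c * ((m.1 : ℝ) - b * k * m.2), c * m.2)} (fun _ => 1)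
      = ENNReal.ofReal (1 / (b * c ^ 2 * Real.log a)) := by
  have hla : 0 < Real.log a := Real.log_pos ha
  set Λ : Set SG := {p : SG | ∃ (j k : ℤ) (m : ℤ × ℤ),
        p = ((a ^ j : ℝ), b * k, c * ((m.1 : ℝ) - b * k * m.2), c * m.2)} with hΛ
  set L : ℝ≥0∞ := ENNReal.ofReal (1 / (b * c ^ 2 * Real.log a)) with hL
  set flo : ℝ → ℝ≥0∞ := fun h =>
    ENNReal.ofReal ((h/Real.log a + (-2)) * ((h/b + (-2)) * ((h/c + (-2)) * (h/c + (-2))))) /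
      ENNReal.ofReal (h^4) with hflo
  set fhi : ℝ → ℝ≥0∞ := fun h =>
    ENNReal.ofReal ((h/Real.log a + 1) * ((h/b + 1) * ((h/c + 1) * (h/c + 1)))) /
      ENNReal.ofReal (h^4) with hfhi
  have htlo : Tendsto flo atTop (nhds L) := tendsto_aux hla hb hc (-2)
  have hthi : Tendsto fhi atTop (nhds L) := tendsto_aux hla hb hc 1
  have hwnum : ∀ (h : ℝ) (g : SG), wNum Λ (fun _ => 1) (boxAt h g)
      = ((phi a b c ⁻¹' boxAt h g).encard : ℝ≥0∞) := fun h g => wNum_eq ha hb hc _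
  have hbound : ∀ᶠ h : ℝ in atTop,
      ((flo h ≤ ⨆ (g : SG) (_ : 0 < g.1), wNum Λ (fun _ => 1) (boxAt h g) / ENNReal.ofReal (h ^ 4)) ∧
       ((⨆ (g : SG) (_ : 0 < g.1), wNum Λ (fun _ => 1) (boxAt h g) / ENNReal.ofReal (h ^ 4)) ≤ fhi h)) ∧
      ((flo h ≤ ⨅ (g : SG) (_ : 0 < g.1), wNum Λ (fun _ => 1) (boxAt h g) / ENNReal.ofReal (h ^ 4)) ∧
       ((⨅ (g : SG) (_ : 0 < g.1), wNum Λ (fun _ => 1) (boxAt h g) / ENNReal.ofReal (h ^ 4)) ≤ fhi h)) := by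
    filter_upwards [eventually_ge_atTop (2*Real.log a), eventually_ge_atTop (2*b),
      eventually_ge_atTop (2*c), eventually_gt_atTop 0] with h h2a h2b h2c hh
    have hup : ∀ g : SG, 0 < g.1 →
        wNum Λ (fun _ => 1) (boxAt h g) / ENNReal.ofReal (h ^ 4) ≤ fhi h := by
      intro g hg
      rw [hwnum h g]
      exact ENNReal.div_le_div_right (card_upper ha hb hc hg hh) _
    have hlo : ∀ g : SG, 0 < g.1 →
        flo h ≤ wNum Λ (fun _ => 1) (boxAt h g) / ENNReal.ofReal (h ^ 4) := by
      intro g hg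
      rw [hwnum h g]
      have hcl := card_lower ha hb hc hg h2a h2b h2c
      rw [show (h/Real.log a - 2) * ((h/b - 2) * ((h/c - 2) * (h/c - 2)))
          = (h/Real.log a + (-2)) * ((h/b + (-2)) * ((h/c + (-2)) * (h/c + (-2)))) from by ring]
        at hcl
      exact ENNReal.div_le_div_right hcl _
    have hg0 : (0:ℝ) < (((1:ℝ),(0:ℝ),(0:ℝ),(0:ℝ)) : SG).1 := one_pos
    refine ⟨⟨?_, ?_⟩, ?_, ?_⟩
    · exact le_iSup₂_of_le (((1:ℝ),(0:ℝ),(0:ℝ),(0:ℝ)) : SG) hg0 (hlo _ hg0)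
    · exact iSup₂_le hup
    · exact le_iInf₂ hlo
    · exact iInf₂_le_of_le (((1:ℝ),(0:ℝ),(0:ℝ),(0:ℝ)) : SG) hg0 (hup _ hg0)
  have hFt : Tendsto (fun h : ℝ =>
      ⨆ (g : SG) (_ : 0 < g.1), wNum Λ (fun _ => 1) (boxAt h g) / ENNReal.ofReal (h ^ 4))
      atTop (nhds L) :=
    tendsto_of_tendsto_of_tendsto_of_le_of_le' htlo hthi
      (hbound.mono fun h hh => hh.1.1) (hbound.mono fun h hh => hh.1.2)
  have hGt : Tendsto (fun h : ℝ =>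
      ⨅ (g : SG) (_ : 0 < g.1), wNum Λ (fun _ => 1) (boxAt h g) / ENNReal.ofReal (h ^ 4))
      atTop (nhds L) :=
    tendsto_of_tendsto_of_tendsto_of_le_of_le' htlo hthi
      (hbound.mono fun h hh => hh.2.1) (hbound.mono fun h hh => hh.2.2)
  exact ⟨hFt.limsup_eq, hGt.liminf_eq⟩

end
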